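/- For every initial distribution p on ℝ with ∫ w dp < ∞ and all thresholds −∞ ≤ z₁ < z₂ ≤ ∞: F(p,z₁) − F(p,z₂) = ∫_{(z₁,z₂]} f(y,z₂) μ_p^{z₁}(dy) = ∫_{(z₁,z₂]} f(y,z₁) μ_p^{z₂}(dy), and G(p,z₁) − G(p,z₂) = ∫_{(z₁,z₂]} g(y,z₂) μ_p^{z₁}(dy) = ∫_{(z₁,z₂]} g(y,z₁) μ_p^{z₂}(dy). -/

import Mathlib

open MeasureTheory ProbabilityTheory Filter Topology Set

noncomputable section

/-- A restless bandit project: the model data (discount factor `β`, passive/active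
Markov transition kernels `κ false`/`κ true`, reward `r` and resource consumption `c`),
Assumption 1 (the weighted sup-norm conditions for weight `w` and constants `M`, `γ`),
together with the threshold-policy performance metrics `F`, `G` (for `z`-policies,
active iff `x > z`), `Fm`, `Gm` (for `z⁻`-policies, active iff `x ≥ z`), and the
optimal value function `V lam` of the `lam`-price problem, each of which is the
(unique) `w`-bounded measurable solution of its fixed-point equation. -/
structure Bandit where
  β : ℝ
  κ : Bool → Kernel ℝ ℝ
  r : ℝ → Bool → ℝ
  c : ℝ → Bool → ℝ
  w : ℝ → ℝ
  M : ℝ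
  γ : ℝ
  F : ℝ → EReal → ℝ
  G : ℝ → EReal → ℝ
  Fm : ℝ → EReal → ℝ
  Gm : ℝ → EReal → ℝ
  V : ℝ → ℝ → ℝ
  hβ0 : 0 ≤ β
  hβ1 : β < 1
  hκ : ∀ a, IsMarkovKernel (κ a)
  hr_cont : ∀ a, Continuous fun x => r x a
  hc_cont : ∀ a, Continuous fun x => c x a
  hc0 : ∀ x, 0 ≤ c x false
  hc01 : ∀ x, c x false < c x true
  hw_meas : Measurable w
  hw_one : ∀ x, 1 ≤ w x
  hM : 0 < M
  hβγ : β ≤ γ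
  hγ1 : γ < 1
  hr_bd : ∀ x a, |r x a| ≤ M * w x
  hc_bd : ∀ x a, c x a ≤ M * w x
  hw_int : ∀ a x, Integrable w (κ a x)
  hw_drift : ∀ a x, β * ∫ y, w y ∂(κ a x) ≤ γ * w x
  hF_meas : ∀ z, Measurable fun x => F x z
  hG_meas : ∀ z, Measurable fun x => G x z
  hFm_meas : ∀ z, Measurable fun x => Fm x z
  hGm_meas : ∀ z, Measurable fun x => Gm x z
  hV_meas : ∀ lam, Measurable (V lam)
  hF_bdd : ∀ z, ∃ C, ∀ x, |F x z| ≤ C * w x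
  hG_bdd : ∀ z, ∃ C, ∀ x, |G x z| ≤ C * w x
  hFm_bdd : ∀ z, ∃ C, ∀ x, |Fm x z| ≤ C * w x
  hGm_bdd : ∀ z, ∃ C, ∀ x, |Gm x z| ≤ C * w x
  hV_bdd : ∀ lam, ∃ C, ∀ x, |V lam x| ≤ C * w x
  hF_eq : ∀ x z, F x z =
    r x (decide (z < (x : EReal))) +
      β * ∫ y, F y z ∂(κ (decide (z < (x : EReal))) x)
  hG_eq : ∀ x z, G x z =
    c x (decide (z < (x : EReal))) +
      β * ∫ y, G y z ∂(κ (decide (z < (x : EReal))) x)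
  hFm_eq : ∀ x z, Fm x z =
    r x (decide (z ≤ (x : EReal))) +
      β * ∫ y, Fm y z ∂(κ (decide (z ≤ (x : EReal))) x)
  hGm_eq : ∀ x z, Gm x z =
    c x (decide (z ≤ (x : EReal))) +
      β * ∫ y, Gm y z ∂(κ (decide (z ≤ (x : EReal))) x)
  hV_eq : ∀ lam x, V lam x =
    max (r x false - lam * c x false + β * ∫ y, V lam y ∂(κ false x))
        (r x true - lam * c x true + β * ∫ y, V lam y ∂(κ true x))

/-- `ν` is the Lebesgue–Stieltjes measure of the (bounded nonincreasing
right-continuous) function `h`: `ν(z₁,z₂] = h z₁ - h z₂`. -/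
def IsLSMeasureOfAnti (h : ℝ → ℝ) (ν : Measure ℝ) : Prop :=
  ∀ z₁ z₂ : ℝ, z₁ ≤ z₂ → ν (Set.Ioc z₁ z₂) = ENNReal.ofReal (h z₁ - h z₂)

/-- `ν` is the Lebesgue–Stieltjes measure of the (bounded nondecreasing
right-continuous) function `h`: `ν(z₁,z₂] = h z₂ - h z₁`. -/
def IsLSMeasureOfMono (h : ℝ → ℝ) (ν : Measure ℝ) : Prop :=
  ∀ z₁ z₂ : ℝ, z₁ ≤ z₂ → ν (Set.Ioc z₁ z₂) = ENNReal.ofReal (h z₂ - h z₁)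

/-- The real interval `(z₁, z₂] ⊆ ℝ` with extended-real endpoints. -/
def iocR (z₁ z₂ : EReal) : Set ℝ := {y : ℝ | z₁ < (y : EReal) ∧ (y : EReal) ≤ z₂}

/-- `t`-step distribution of the Markov chain with kernel `κ` and initial law `p`. -/
def kerIter (κ : Kernel ℝ ℝ) : ℕ → Measure ℝ → Measure ℝ
  | 0, p => p
  | (t + 1), p => (kerIter κ t p).bind fun x => κ x

namespace Bandit

variable (P : Bandit)

/-- Marginal reward metric `f(x,z)` of the `z`-policy. -/
def f (x : ℝ) (z : EReal) : ℝ :=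
  (P.r x true - P.r x false) +
    P.β * ((∫ y, P.F y z ∂(P.κ true x)) - ∫ y, P.F y z ∂(P.κ false x))

/-- Marginal resource metric `g(x,z)` of the `z`-policy. -/
def g (x : ℝ) (z : EReal) : ℝ :=
  (P.c x true - P.c x false) +
    P.β * ((∫ y, P.G y z ∂(P.κ true x)) - ∫ y, P.G y z ∂(P.κ false x))

/-- Marginal reward metric `f(x,z⁻)` of the `z⁻`-policy. -/
def fm (x : ℝ) (z : EReal) : ℝ :=
  (P.r x true - P.r x false) +
    P.β * ((∫ y, P.Fm y z ∂(P.κ true x)) - ∫ y, P.Fm y z ∂(P.κ false x))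

/-- Marginal resource metric `g(x,z⁻)` of the `z⁻`-policy. -/
def gm (x : ℝ) (z : EReal) : ℝ :=
  (P.c x true - P.c x false) +
    P.β * ((∫ y, P.Gm y z ∂(P.κ true x)) - ∫ y, P.Gm y z ∂(P.κ false x))

/-- Marginal productivity metric `m(x,z) = f(x,z)/g(x,z)`. -/
def m (x : ℝ) (z : EReal) : ℝ := P.f x z / P.g x z

/-- Marginal productivity metric `m(x,z⁻) = f(x,z⁻)/g(x,z⁻)`. -/
def mm (x : ℝ) (z : EReal) : ℝ := P.fm x z / P.gm x z

/-- The marginal productivity (MP) index `m*(x) = m(x,x)`. -/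
def mStar (x : ℝ) : ℝ := P.m x (x : EReal)

/-- The active action is `P_lam`-optimal at `x`. -/
def ActOpt (lam x : ℝ) : Prop :=
  P.r x false - lam * P.c x false + P.β * ∫ y, P.V lam y ∂(P.κ false x) ≤
    P.r x true - lam * P.c x true + P.β * ∫ y, P.V lam y ∂(P.κ true x)

/-- The passive action is `P_lam`-optimal at `x`. -/
def PassOpt (lam x : ℝ) : Prop :=
  P.r x true - lam * P.c x true + P.β * ∫ y, P.V lam y ∂(P.κ true x) ≤
    P.r x false - lam * P.c x false + P.β * ∫ y, P.V lam y ∂(P.κ false x)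

/-- The project is indexable with index `ν`. -/
def Indexable (ν : ℝ → ℝ) : Prop :=
  ∀ lam x, (P.ActOpt lam x ↔ lam ≤ ν x) ∧ (P.PassOpt lam x ↔ ν x ≤ lam)

/-- The `z`-policy is `P_lam`-optimal. -/
def ZPolicyOpt (z : EReal) (lam : ℝ) : Prop :=
  ∀ x, P.F x z - lam * P.G x z = P.V lam x

/-- The `z⁻`-policy is `P_lam`-optimal. -/
def ZmPolicyOpt (z : EReal) (lam : ℝ) : Prop :=
  ∀ x, P.Fm x z - lam * P.Gm x z = P.V lam x

/-- The project is strongly threshold-indexable with index `ν`. -/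
def StronglyThresholdIndexable (ν : ℝ → ℝ) : Prop :=
  P.Indexable ν ∧
    ∀ lam : ℝ, ∃ z : EReal, P.ZPolicyOpt z lam ∧ P.ZmPolicyOpt z lam

/-- PCL-indexability condition (PCLI1). -/
def PCLI1 : Prop := ∀ (x : ℝ) (z : EReal), 0 < P.g x z

/-- PCL-indexability condition (PCLI2). -/
def PCLI2 : Prop :=
  Monotone P.mStar ∧ Continuous P.mStar ∧ BddBelow (Set.range P.mStar)

/-- PCL-indexability condition (PCLI3). -/
def PCLI3 : Prop :=
  ∀ x : ℝ, ∀ ν : Measure ℝ, IsLSMeasureOfAnti (fun z : ℝ => P.G x z) ν →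
    ∀ z₁ z₂ : ℝ, z₁ < z₂ →
      P.F x z₂ - P.F x z₁ = -∫ z in Set.Ioc z₁ z₂, P.mStar z ∂ν

/-- The project is PCL-indexable. -/
def PCLIndexable : Prop := P.PCLI1 ∧ P.PCLI2 ∧ P.PCLI3

/-- Reward metric with initial distribution `p`. -/
def Fp (p : Measure ℝ) (z : EReal) : ℝ := ∫ x, P.F x z ∂p

/-- Resource metric with initial distribution `p`. -/
def Gp (p : Measure ℝ) (z : EReal) : ℝ := ∫ x, P.G x z ∂p

/-- `z⁻`-policy reward metric with initial distribution `p`. -/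
def Fmp (p : Measure ℝ) (z : EReal) : ℝ := ∫ x, P.Fm x z ∂p

/-- `z⁻`-policy resource metric with initial distribution `p`. -/
def Gmp (p : Measure ℝ) (z : EReal) : ℝ := ∫ x, P.Gm x z ∂p

/-- An admissible initial distribution: a probability measure with `∫ w dp < ∞`. -/
def IsInitDist (p : Measure ℝ) : Prop :=
  IsProbabilityMeasure p ∧ Integrable P.w p

/-- The transition kernel of the `z`-policy (active iff `x > z`). -/
def thrKer (z : EReal) : Kernel ℝ ℝ :=
  haveI : DecidablePred (· ∈ {x : ℝ | z < (x : EReal)}) := Classical.decPred _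
  Kernel.piecewise
    (show MeasurableSet {x : ℝ | z < (x : EReal)} from
      measurable_coe_real_ereal measurableSet_Ioi)
    (P.κ true) (P.κ false)

/-- The transition kernel of the `z⁻`-policy (active iff `x ≥ z`). -/
def thrKerM (z : EReal) : Kernel ℝ ℝ :=
  haveI : DecidablePred (· ∈ {x : ℝ | z ≤ (x : EReal)}) := Classical.decPred _
  Kernel.piecewise
    (show MeasurableSet {x : ℝ | z ≤ (x : EReal)} from
      measurable_coe_real_ereal measurableSet_Ici)
    (P.κ true) (P.κ false)

/-- The (discounted) state occupation measure `μ_p^z` of the `z`-policy. -/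
def occ (z : EReal) (p : Measure ℝ) : Measure ℝ :=
  Measure.sum fun t : ℕ => ENNReal.ofReal (P.β ^ t) • kerIter (P.thrKer z) t p

/-- The (discounted) state occupation measure `μ_p^{z⁻}` of the `z⁻`-policy. -/
def occM (z : EReal) (p : Measure ℝ) : Measure ℝ :=
  Measure.sum fun t : ℕ => ENNReal.ofReal (P.β ^ t) • kerIter (P.thrKerM z) t p

end Bandit

/-- Finite-horizon reward metric `F_k(x,z)` (value iteration). -/
def Bandit.Fk (P : Bandit) : ℕ → ℝ → EReal → ℝ
  | 0, x, z => P.r x (decide (z < (x : EReal)))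
  | (k + 1), x, z =>
      P.r x (decide (z < (x : EReal))) +
        P.β * ∫ y, Bandit.Fk P k y z ∂(P.κ (decide (z < (x : EReal))) x)

/-- Finite-horizon resource metric `G_k(x,z)` (value iteration). -/
def Bandit.Gk (P : Bandit) : ℕ → ℝ → EReal → ℝ
  | 0, x, z => P.c x (decide (z < (x : EReal)))
  | (k + 1), x, z =>
      P.c x (decide (z < (x : EReal))) +
        P.β * ∫ y, Bandit.Gk P k y z ∂(P.κ (decide (z < (x : EReal))) x)

/-- Finite-horizon marginal reward metric `f_k(x,z)`. -/
def Bandit.fk (P : Bandit) : ℕ → ℝ → EReal → ℝ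
  | 0, x, _ => P.r x true - P.r x false
  | (k + 1), x, z =>
      (P.r x true - P.r x false) +
        P.β * ((∫ y, P.Fk k y z ∂(P.κ true x)) - ∫ y, P.Fk k y z ∂(P.κ false x))

/-- Finite-horizon marginal resource metric `g_k(x,z)`. -/
def Bandit.gk (P : Bandit) : ℕ → ℝ → EReal → ℝ
  | 0, x, _ => P.c x true - P.c x false
  | (k + 1), x, z =>
      (P.c x true - P.c x false) +
        P.β * ((∫ y, P.Gk k y z ∂(P.κ true x)) - ∫ y, P.Gk k y z ∂(P.κ false x))

namespace Bandit

variable (P : Bandit)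

/-- Finite-horizon MP metric `m_k(x,z)`. -/
def mk' (k : ℕ) (x : ℝ) (z : EReal) : ℝ := P.fk k x z / P.gk k x z

/-- Finite-horizon MP index `m*_k(x)`. -/
def mkStar (k : ℕ) (x : ℝ) : ℝ := P.mk' k x (x : EReal)

/-- `g̲(x,z) = inf_k g_k(x,z)`. -/
def gbar (x : ℝ) (z : EReal) : ℝ := ⨅ k : ℕ, P.gk k x z

end Bandit

section AuxProofs

open MeasureTheory ProbabilityTheory

lemma aux_integrable_of_wbd {w v : ℝ → ℝ} {μ : Measure ℝ}
    (hv : AEStronglyMeasurable v μ) {C : ℝ}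
    (hb : ∀ x, |v x| ≤ C * w x) (hwint : Integrable w μ) : Integrable v μ :=
  (hwint.const_mul C).mono' hv (Filter.Eventually.of_forall fun x => by
    simpa [Real.norm_eq_abs] using hb x)

lemma aux_C_nonneg {w v : ℝ → ℝ} (hw1 : ∀ x, 1 ≤ w x) {C : ℝ}
    (hb : ∀ x, |v x| ≤ C * w x) : 0 ≤ C := by
  by_contra hC
  push_neg at hC
  have hw0 : (0:ℝ) < w 0 := lt_of_lt_of_le one_pos (hw1 0)
  have := (abs_nonneg (v 0)).trans (hb 0)
  nlinarith

lemma aux_abs_integral_le {w v : ℝ → ℝ} {μ : Measure ℝ}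
    (hv : AEStronglyMeasurable v μ) {C : ℝ}
    (hb : ∀ x, |v x| ≤ C * w x) (hwint : Integrable w μ) :
    |∫ x, v x ∂μ| ≤ C * ∫ x, w x ∂μ := by
  have hvi : Integrable v μ := aux_integrable_of_wbd hv hb hwint
  calc |∫ x, v x ∂μ| ≤ ∫ x, |v x| ∂μ := by
        simpa [Real.norm_eq_abs] using norm_integral_le_integral_norm v (μ := μ)
    _ ≤ ∫ x, C * w x ∂μ := integral_mono hvi.abs (hwint.const_mul C) fun x => hb x
    _ = C * ∫ x, w x ∂μ := integral_const_mul _ _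

lemma aux_integral_bind (κ : Kernel ℝ ℝ) [IsMarkovKernel κ] {g : ℝ → ℝ} (hg : Measurable g)
    (m : Measure ℝ) (hgi : ∀ x, Integrable g (κ x))
    (hgb : Integrable g (m.bind fun x => κ x)) :
    ∫ y, g y ∂(m.bind fun x => κ x) = ∫ x, ∫ y, g y ∂κ x ∂m := by
  have hgp : Measurable fun y => ENNReal.ofReal (g y) := hg.ennreal_ofReal
  have hgn : Measurable fun y => ENNReal.ofReal (-g y) := hg.neg.ennreal_ofReal
  have hbp : ∫⁻ y, ENNReal.ofReal (g y) ∂(m.bind fun x => κ x)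
      = ∫⁻ x, ∫⁻ y, ENNReal.ofReal (g y) ∂κ x ∂m :=
    Measure.lintegral_bind κ.measurable.aemeasurable hgp.aemeasurable
  have hbn : ∫⁻ y, ENNReal.ofReal (-g y) ∂(m.bind fun x => κ x)
      = ∫⁻ x, ∫⁻ y, ENNReal.ofReal (-g y) ∂κ x ∂m :=
    Measure.lintegral_bind κ.measurable.aemeasurable hgn.aemeasurable
  have hLpm : Measurable fun x => ∫⁻ y, ENNReal.ofReal (g y) ∂κ x :=
    Measurable.lintegral_kernel hgp
  have hLnm : Measurable fun x => ∫⁻ y, ENNReal.ofReal (-g y) ∂κ x :=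
    Measurable.lintegral_kernel hgn
  have hLpfin : ∀ x, (∫⁻ y, ENNReal.ofReal (g y) ∂κ x) < ⊤ := fun x =>
    (hgi x).lintegral_lt_top
  have hLnfin : ∀ x, (∫⁻ y, ENNReal.ofReal (-g y) ∂κ x) < ⊤ := fun x =>
    (hgi x).neg.lintegral_lt_top
  have hfp : ∫⁻ x, ∫⁻ y, ENNReal.ofReal (g y) ∂κ x ∂m < ⊤ := by
    rw [← hbp]; exact hgb.lintegral_lt_top
  have hfn : ∫⁻ x, ∫⁻ y, ENNReal.ofReal (-g y) ∂κ x ∂m < ⊤ := by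
    rw [← hbn]; exact hgb.neg.lintegral_lt_top
  have intp : Integrable (fun x => (∫⁻ y, ENNReal.ofReal (g y) ∂κ x).toReal) m := by
    refine ⟨hLpm.ennreal_toReal.aestronglyMeasurable, ?_⟩
    rw [hasFiniteIntegral_iff_ofReal (Filter.Eventually.of_forall fun x =>
      ENNReal.toReal_nonneg)]
    exact lt_of_le_of_lt (lintegral_mono fun x => ENNReal.ofReal_toReal_le) hfp
  have intn : Integrable (fun x => (∫⁻ y, ENNReal.ofReal (-g y) ∂κ x).toReal) m := by
    refine ⟨hLnm.ennreal_toReal.aestronglyMeasurable, ?_⟩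
    rw [hasFiniteIntegral_iff_ofReal (Filter.Eventually.of_forall fun x =>
      ENNReal.toReal_nonneg)]
    exact lt_of_le_of_lt (lintegral_mono fun x => ENNReal.ofReal_toReal_le) hfn
  rw [integral_eq_lintegral_pos_part_sub_lintegral_neg_part hgb, hbp, hbn,
    ← integral_toReal hLpm.aemeasurable (Filter.Eventually.of_forall hLpfin),
    ← integral_toReal hLnm.aemeasurable (Filter.Eventually.of_forall hLnfin),
    ← integral_sub intp intn]
  exact (integral_congr_ae (Filter.Eventually.of_forall fun x =>
    (integral_eq_lintegral_pos_part_sub_lintegral_neg_part (hgi x)))).symm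

end AuxProofs

section WKey

open MeasureTheory ProbabilityTheory Filter

lemma aux_wkey {w : ℝ → ℝ} {β γ : ℝ} (hw_meas : Measurable w) (hw1 : ∀ x, 1 ≤ w x)
    (hβ0 : 0 ≤ β) (hβγ : β ≤ γ) (hγ1 : γ < 1)
    (κ : Kernel ℝ ℝ) [IsMarkovKernel κ]
    (hκw : ∀ x, Integrable w (κ x))
    (hdrift : ∀ x, β * ∫ y, w y ∂κ x ≤ γ * w x)
    {u h : ℝ → ℝ} (hu : Measurable u) (hh : Measurable h)
    {Cu Ch : ℝ} (hub : ∀ x, |u x| ≤ Cu * w x) (hhb : ∀ x, |h x| ≤ Ch * w x)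
    (heq : ∀ x, u x = h x + β * ∫ y, u y ∂κ x)
    (p : Measure ℝ) (hwp : Integrable w p) :
    ∫ x, u x ∂p
      = ∫ y, h y ∂(Measure.sum fun t : ℕ => ENNReal.ofReal (β ^ t) • kerIter κ t p) := by
  have hγ0 : 0 ≤ γ := hβ0.trans hβγ
  have hCu : 0 ≤ Cu := aux_C_nonneg hw1 hub
  have hCh : 0 ≤ Ch := aux_C_nonneg hw1 hhb
  have hwnn : ∀ x, (0:ℝ) ≤ w x := fun x => zero_le_one.trans (hw1 x)
  rcases eq_or_lt_of_le hβ0 with hb0 | hbpos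
  · -- β = 0
    have hsum : (Measure.sum fun t : ℕ => ENNReal.ofReal (β ^ t) • kerIter κ t p) = p := by
      ext s hs
      rw [Measure.sum_apply _ hs, tsum_eq_single 0]
      · simp [kerIter]
      · intro t ht
        obtain ⟨t', rfl⟩ := Nat.exists_eq_succ_of_ne_zero ht
        simp [← hb0]
    rw [hsum]
    refine integral_congr_ae (Filter.Eventually.of_forall fun x => ?_)
    rw [heq x, ← hb0]; ring
  -- β > 0
  have hWm : Measurable fun x => ENNReal.ofReal (w x) := hw_meas.ennreal_ofReal
  have hdrift' : ∀ x, ENNReal.ofReal β * ∫⁻ y, ENNReal.ofReal (w y) ∂κ x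
      ≤ ENNReal.ofReal γ * ENNReal.ofReal (w x) := by
    intro x
    rw [← ofReal_integral_eq_lintegral_ofReal (hκw x)
      (Filter.Eventually.of_forall fun y => hwnn y),
      ← ENNReal.ofReal_mul hβ0, ← ENNReal.ofReal_mul hγ0]
    exact ENNReal.ofReal_le_ofReal (hdrift x)
  have hA : ∀ t, (ENNReal.ofReal β)^t * ∫⁻ x, ENNReal.ofReal (w x) ∂(kerIter κ t p)
      ≤ (ENNReal.ofReal γ)^t * ∫⁻ x, ENNReal.ofReal (w x) ∂p := by
    intro t
    induction t with
    | zero => simp [kerIter]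
    | succ t ih =>
      have hbind : ∫⁻ x, ENNReal.ofReal (w x) ∂(kerIter κ (t+1) p)
          = ∫⁻ x, ∫⁻ y, ENNReal.ofReal (w y) ∂κ x ∂(kerIter κ t p) :=
        Measure.lintegral_bind κ.measurable.aemeasurable hWm.aemeasurable
      have inner : ENNReal.ofReal β * ∫⁻ x, (∫⁻ y, ENNReal.ofReal (w y) ∂κ x) ∂(kerIter κ t p)
          ≤ ENNReal.ofReal γ * ∫⁻ x, ENNReal.ofReal (w x) ∂(kerIter κ t p) := by
        rw [← lintegral_const_mul _ (Measurable.lintegral_kernel hWm),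
          ← lintegral_const_mul _ hWm]
        exact lintegral_mono hdrift'
      calc (ENNReal.ofReal β)^(t+1) * ∫⁻ x, ENNReal.ofReal (w x) ∂(kerIter κ (t+1) p)
          = (ENNReal.ofReal β)^t * (ENNReal.ofReal β
            * ∫⁻ x, (∫⁻ y, ENNReal.ofReal (w y) ∂κ x) ∂(kerIter κ t p)) := by
            rw [hbind, pow_succ]; ring
        _ ≤ (ENNReal.ofReal β)^t * (ENNReal.ofReal γ
            * ∫⁻ x, ENNReal.ofReal (w x) ∂(kerIter κ t p)) := mul_le_mul_right inner _
        _ = ENNReal.ofReal γ * ((ENNReal.ofReal β)^t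
            * ∫⁻ x, ENNReal.ofReal (w x) ∂(kerIter κ t p)) := by ring
        _ ≤ ENNReal.ofReal γ * ((ENNReal.ofReal γ)^t
            * ∫⁻ x, ENNReal.ofReal (w x) ∂p) := mul_le_mul_right ih _
        _ = (ENNReal.ofReal γ)^(t+1) * ∫⁻ x, ENNReal.ofReal (w x) ∂p := by
            rw [pow_succ]; ring
  have hA0 : ∫⁻ x, ENNReal.ofReal (w x) ∂p = ENNReal.ofReal (∫ x, w x ∂p) :=
    (ofReal_integral_eq_lintegral_ofReal hwp (Filter.Eventually.of_forall hwnn)).symm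
  have hAfin : ∀ t, ∫⁻ x, ENNReal.ofReal (w x) ∂(kerIter κ t p) < ⊤ := by
    intro t
    have hfin : (ENNReal.ofReal γ)^t * ∫⁻ x, ENNReal.ofReal (w x) ∂p < ⊤ := by
      rw [hA0]
      exact ENNReal.mul_lt_top (ENNReal.pow_ne_top ENNReal.ofReal_ne_top).lt_top
        ENNReal.ofReal_lt_top
    by_contra htop
    rw [not_lt, top_le_iff] at htop
    have h1 := hA t
    rw [htop, ENNReal.mul_top (pow_ne_zero t (ENNReal.ofReal_pos.2 hbpos).ne')] at h1
    exact absurd (top_le_iff.1 h1) hfin.ne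
  have hwint : ∀ t, Integrable w (kerIter κ t p) := by
    intro t
    refine ⟨hw_meas.aestronglyMeasurable, ?_⟩
    rw [hasFiniteIntegral_iff_ofReal (Filter.Eventually.of_forall hwnn)]
    exact hAfin t
  have hui : ∀ t, Integrable u (kerIter κ t p) := fun t =>
    aux_integrable_of_wbd hu.aestronglyMeasurable hub (hwint t)
  have hhi : ∀ t, Integrable h (kerIter κ t p) := fun t =>
    aux_integrable_of_wbd hh.aestronglyMeasurable hhb (hwint t)
  have hκu : ∀ x, Integrable u (κ x) := fun x =>
    aux_integrable_of_wbd hu.aestronglyMeasurable hub (hκw x)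
  have hKsm : StronglyMeasurable fun x => ∫ y, u y ∂κ x :=
    StronglyMeasurable.integral_kernel_prod_right (f := fun _ y => u y)
      ((hu.comp measurable_snd).stronglyMeasurable)
  have hKbd : ∀ x, |∫ y, u y ∂κ x| ≤ (Cu * γ / β) * w x := by
    intro x
    have h1 : |∫ y, u y ∂κ x| ≤ Cu * ∫ y, w y ∂κ x :=
      aux_abs_integral_le hu.aestronglyMeasurable hub (hκw x)
    have h2 : ∫ y, w y ∂κ x ≤ γ * w x / β := by
      rw [le_div_iff₀ hbpos]
      linarith [hdrift x]
    calc |∫ y, u y ∂κ x| ≤ Cu * (γ * w x / β) :=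
          h1.trans (mul_le_mul_of_nonneg_left h2 hCu)
      _ = (Cu * γ / β) * w x := by ring
  have hstep : ∀ t, ∫ x, u x ∂(kerIter κ t p)
      = (∫ x, h x ∂(kerIter κ t p)) + β * ∫ x, u x ∂(kerIter κ (t+1) p) := by
    intro t
    have hbind : ∫ y, u y ∂(kerIter κ (t+1) p)
        = ∫ x, ∫ y, u y ∂κ x ∂(kerIter κ t p) :=
      aux_integral_bind κ hu (kerIter κ t p) hκu (hui (t+1))
    have hKint : Integrable (fun x => ∫ y, u y ∂κ x) (kerIter κ t p) :=
      aux_integrable_of_wbd hKsm.aestronglyMeasurable hKbd (hwint t)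
    calc ∫ x, u x ∂(kerIter κ t p)
        = ∫ x, (h x + β * ∫ y, u y ∂κ x) ∂(kerIter κ t p) :=
          integral_congr_ae (Filter.Eventually.of_forall fun x => heq x)
      _ = (∫ x, h x ∂(kerIter κ t p)) + ∫ x, β * ∫ y, u y ∂κ x ∂(kerIter κ t p) :=
          integral_add (hhi t) (hKint.const_mul β)
      _ = (∫ x, h x ∂(kerIter κ t p)) + β * ∫ x, ∫ y, u y ∂κ x ∂(kerIter κ t p) := by
          rw [integral_const_mul]
      _ = (∫ x, h x ∂(kerIter κ t p)) + β * ∫ x, u x ∂(kerIter κ (t+1) p) := by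
          rw [hbind]
  have hpartial : ∀ n, ∫ x, u x ∂p
      = (∑ t ∈ Finset.range n, β^t * ∫ x, h x ∂(kerIter κ t p))
        + β^n * ∫ x, u x ∂(kerIter κ n p) := by
    intro n
    induction n with
    | zero => simp [kerIter]
    | succ n ih =>
      rw [Finset.sum_range_succ, ih, hstep n, pow_succ]; ring
  have hreal : ∀ n, β^n * ∫ x, w x ∂(kerIter κ n p) ≤ γ^n * ∫ x, w x ∂p := by
    intro n
    have h1 := hA n
    rw [hA0, ← ofReal_integral_eq_lintegral_ofReal (hwint n)
      (Filter.Eventually.of_forall hwnn), ← ENNReal.ofReal_pow hβ0,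
      ← ENNReal.ofReal_pow hγ0, ← ENNReal.ofReal_mul (pow_nonneg hβ0 n),
      ← ENNReal.ofReal_mul (pow_nonneg hγ0 n)] at h1
    exact (ENNReal.ofReal_le_ofReal_iff (mul_nonneg (pow_nonneg hγ0 n)
      (integral_nonneg hwnn))).1 h1
  have htail : Tendsto (fun n => β^n * ∫ x, u x ∂(kerIter κ n p)) atTop (nhds 0) := by
    have hb : ∀ n, ‖β^n * ∫ x, u x ∂(kerIter κ n p)‖ ≤ (Cu * ∫ x, w x ∂p) * γ^n := by
      intro n
      have h1 : |∫ x, u x ∂(kerIter κ n p)| ≤ Cu * ∫ x, w x ∂(kerIter κ n p) :=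
        aux_abs_integral_le hu.aestronglyMeasurable hub (hwint n)
      rw [Real.norm_eq_abs, abs_mul, abs_of_nonneg (pow_nonneg hβ0 n)]
      calc β^n * |∫ x, u x ∂(kerIter κ n p)|
          ≤ β^n * (Cu * ∫ x, w x ∂(kerIter κ n p)) :=
            mul_le_mul_of_nonneg_left h1 (pow_nonneg hβ0 n)
        _ = Cu * (β^n * ∫ x, w x ∂(kerIter κ n p)) := by ring
        _ ≤ Cu * (γ^n * ∫ x, w x ∂p) := mul_le_mul_of_nonneg_left (hreal n) hCu
        _ = (Cu * ∫ x, w x ∂p) * γ^n := by ring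
    exact squeeze_zero_norm hb (by
      simpa using (tendsto_pow_atTop_nhds_zero_of_lt_one hγ0 hγ1).const_mul
        (Cu * ∫ x, w x ∂p))
  have hwsum : Integrable w (Measure.sum fun t : ℕ => ENNReal.ofReal (β ^ t) • kerIter κ t p) := by
    refine ⟨hw_meas.aestronglyMeasurable, ?_⟩
    rw [hasFiniteIntegral_iff_ofReal (Filter.Eventually.of_forall hwnn),
      lintegral_sum_measure]
    have hterm : ∀ t : ℕ, ∫⁻ x, ENNReal.ofReal (w x) ∂(ENNReal.ofReal (β ^ t) • kerIter κ t p)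
        ≤ (ENNReal.ofReal γ)^t * ∫⁻ x, ENNReal.ofReal (w x) ∂p := by
      intro t
      rw [lintegral_smul_measure, ENNReal.ofReal_pow hβ0]
      exact hA t
    calc ∑' t : ℕ, ∫⁻ x, ENNReal.ofReal (w x) ∂(ENNReal.ofReal (β ^ t) • kerIter κ t p)
        ≤ ∑' t : ℕ, (ENNReal.ofReal γ)^t * ∫⁻ x, ENNReal.ofReal (w x) ∂p :=
          ENNReal.tsum_le_tsum hterm
      _ = (∑' t : ℕ, (ENNReal.ofReal γ)^t) * ∫⁻ x, ENNReal.ofReal (w x) ∂p :=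
          ENNReal.tsum_mul_right
      _ < ⊤ := by
          rw [ENNReal.tsum_geometric, hA0]
          refine ENNReal.mul_lt_top (ENNReal.inv_ne_top.2 ?_).lt_top ENNReal.ofReal_lt_top
          rw [← pos_iff_ne_zero, tsub_pos_iff_lt]
          exact ENNReal.ofReal_lt_one.2 hγ1
  have hint : Integrable h (Measure.sum fun t : ℕ => ENNReal.ofReal (β ^ t) • kerIter κ t p) :=
    aux_integrable_of_wbd hh.aestronglyMeasurable hhb hwsum
  have hHasSum : HasSum (fun t : ℕ => β^t * ∫ x, h x ∂(kerIter κ t p))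
      (∫ y, h y ∂(Measure.sum fun t : ℕ => ENNReal.ofReal (β ^ t) • kerIter κ t p)) := by
    have h0 := hasSum_integral_measure hint
    have heq' : (fun t : ℕ => ∫ y, h y ∂(ENNReal.ofReal (β ^ t) • kerIter κ t p))
        = fun t : ℕ => β^t * ∫ x, h x ∂(kerIter κ t p) := by
      funext t
      rw [integral_smul_measure, ENNReal.toReal_ofReal (pow_nonneg hβ0 t), smul_eq_mul]
    rwa [heq'] at h0
  have h1 := hHasSum.tendsto_sum_nat
  have h2 : Tendsto (fun n => ∑ t ∈ Finset.range n, β^t * ∫ x, h x ∂(kerIter κ t p))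
      atTop (nhds (∫ x, u x ∂p)) := by
    have heq2 : (fun n => ∑ t ∈ Finset.range n, β^t * ∫ x, h x ∂(kerIter κ t p))
        = fun n => (∫ x, u x ∂p) - β^n * ∫ x, u x ∂(kerIter κ n p) := by
      funext n
      rw [hpartial n]; ring
    rw [heq2]
    simpa using tendsto_const_nhds.sub htail
  exact tendsto_nhds_unique h2 h1

end WKey

section MainAux

open MeasureTheory ProbabilityTheory

/-- marginal-metric expression -/
def feAux (P : Bandit) (Φ : ℝ → EReal → ℝ) (R : ℝ → Bool → ℝ) (z : EReal) (y : ℝ) : ℝ :=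
  R y true - R y false
    + P.β * ((∫ y', Φ y' z ∂(P.κ true y)) - ∫ y', Φ y' z ∂(P.κ false y))

lemma aux_main (P : Bandit) (R : ℝ → Bool → ℝ) (Φ : ℝ → EReal → ℝ)
    (hΦ_meas : ∀ z, Measurable fun x => Φ x z)
    (hΦ_bdd : ∀ z, ∃ C, ∀ x, |Φ x z| ≤ C * P.w x)
    (hΦ_eq : ∀ x z, Φ x z = R x (decide (z < (x:EReal)))
      + P.β * ∫ y, Φ y z ∂(P.κ (decide (z < (x:EReal))) x))
    (hR_meas : ∀ a, Measurable fun x => R x a)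
    (hR_bd : ∀ x a, |R x a| ≤ P.M * P.w x)
    (p : Measure ℝ) (hp : P.IsInitDist p) (z₁ z₂ : EReal) (h : z₁ < z₂) :
    ((∫ x, Φ x z₁ ∂p) - (∫ x, Φ x z₂ ∂p)
        = ∫ y in iocR z₁ z₂, feAux P Φ R z₂ y ∂(P.occ z₁ p))
    ∧ ((∫ x, Φ x z₁ ∂p) - (∫ x, Φ x z₂ ∂p)
        = ∫ y in iocR z₁ z₂, feAux P Φ R z₁ y ∂(P.occ z₂ p)) := by
  haveI := P.hκ true
  haveI := P.hκ false
  haveI hmk : ∀ z : EReal, IsMarkovKernel (P.thrKer z) := by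
    intro z
    unfold Bandit.thrKer
    infer_instance
  obtain ⟨C₁, hC₁⟩ := hΦ_bdd z₁
  obtain ⟨C₂, hC₂⟩ := hΦ_bdd z₂
  have hC₁0 : 0 ≤ C₁ := aux_C_nonneg P.hw_one hC₁
  have hC₂0 : 0 ≤ C₂ := aux_C_nonneg P.hw_one hC₂
  have hγ0 : 0 ≤ P.γ := P.hβ0.trans P.hβγ
  have hwnn : ∀ x, (0:ℝ) ≤ P.w x := fun x => zero_le_one.trans (P.hw_one x)
  -- measurability of the difference
  have hu : Measurable fun x => Φ x z₁ - Φ x z₂ := (hΦ_meas z₁).sub (hΦ_meas z₂)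
  have hub : ∀ x, |Φ x z₁ - Φ x z₂| ≤ (C₁ + C₂) * P.w x := by
    intro x
    have h1 := hC₁ x
    have h2 := hC₂ x
    have h3 : |Φ x z₁ - Φ x z₂| ≤ |Φ x z₁| + |Φ x z₂| := by
      calc |Φ x z₁ - Φ x z₂| = |Φ x z₁ + -(Φ x z₂)| := by rw [sub_eq_add_neg]
        _ ≤ |Φ x z₁| + |-(Φ x z₂)| := abs_add_le _ _
        _ = |Φ x z₁| + |Φ x z₂| := by rw [abs_neg]
    have h4 : (C₁ + C₂) * P.w x = C₁ * P.w x + C₂ * P.w x := by ring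
    linarith
  -- measurability of kernel integrals of Φ
  have hMint : ∀ (a : Bool) (z : EReal), StronglyMeasurable fun x => ∫ y, Φ y z ∂(P.κ a x) := by
    intro a z
    haveI := P.hκ a
    exact StronglyMeasurable.integral_kernel_prod_right (f := fun _ y => Φ y z)
      (((hΦ_meas z).comp measurable_snd).stronglyMeasurable)
  have hfe_meas : ∀ z : EReal, Measurable (feAux P Φ R z) := fun z =>
    (((hR_meas true).sub (hR_meas false)).add
      (measurable_const.mul (((hMint true z).measurable).sub ((hMint false z).measurable))))
  have hfe_bd : ∀ (z : EReal) (C : ℝ), 0 ≤ C → (∀ x, |Φ x z| ≤ C * P.w x) →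
      ∀ x, |feAux P Φ R z x| ≤ (2 * P.M + 2 * C * P.γ) * P.w x := by
    intro z C hC0 hC x
    have i1 : |∫ y', Φ y' z ∂(P.κ true x)| ≤ C * ∫ y', P.w y' ∂(P.κ true x) :=
      aux_abs_integral_le (hΦ_meas z).aestronglyMeasurable hC (P.hw_int true x)
    have i0 : |∫ y', Φ y' z ∂(P.κ false x)| ≤ C * ∫ y', P.w y' ∂(P.κ false x) :=
      aux_abs_integral_le (hΦ_meas z).aestronglyMeasurable hC (P.hw_int false x)
    have d1 := P.hw_drift true x
    have d0 := P.hw_drift false x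
    have a1 := hR_bd x true
    have a0 := hR_bd x false
    have hb1 : P.β * |∫ y', Φ y' z ∂(P.κ true x)| ≤ C * (P.γ * P.w x) := by
      calc P.β * |∫ y', Φ y' z ∂(P.κ true x)|
          ≤ P.β * (C * ∫ y', P.w y' ∂(P.κ true x)) :=
            mul_le_mul_of_nonneg_left i1 P.hβ0
        _ = C * (P.β * ∫ y', P.w y' ∂(P.κ true x)) := by ring
        _ ≤ C * (P.γ * P.w x) := mul_le_mul_of_nonneg_left d1 hC0
    have hb0 : P.β * |∫ y', Φ y' z ∂(P.κ false x)| ≤ C * (P.γ * P.w x) := by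
      calc P.β * |∫ y', Φ y' z ∂(P.κ false x)|
          ≤ P.β * (C * ∫ y', P.w y' ∂(P.κ false x)) :=
            mul_le_mul_of_nonneg_left i0 P.hβ0
        _ = C * (P.β * ∫ y', P.w y' ∂(P.κ false x)) := by ring
        _ ≤ C * (P.γ * P.w x) := mul_le_mul_of_nonneg_left d0 hC0
    have t1 : |R x true - R x false| ≤ |R x true| + |R x false| := by
      calc |R x true - R x false| = |R x true + -(R x false)| := by rw [sub_eq_add_neg]
        _ ≤ |R x true| + |-(R x false)| := abs_add_le _ _
        _ = |R x true| + |R x false| := by rw [abs_neg]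
    have t2 : |(∫ y', Φ y' z ∂(P.κ true x)) - ∫ y', Φ y' z ∂(P.κ false x)|
        ≤ |∫ y', Φ y' z ∂(P.κ true x)| + |∫ y', Φ y' z ∂(P.κ false x)| := by
      calc |(∫ y', Φ y' z ∂(P.κ true x)) - ∫ y', Φ y' z ∂(P.κ false x)|
          = |(∫ y', Φ y' z ∂(P.κ true x)) + -(∫ y', Φ y' z ∂(P.κ false x))| := by
            rw [sub_eq_add_neg]
        _ ≤ |∫ y', Φ y' z ∂(P.κ true x)| + |-(∫ y', Φ y' z ∂(P.κ false x))| := abs_add_le _ _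
        _ = |∫ y', Φ y' z ∂(P.κ true x)| + |∫ y', Φ y' z ∂(P.κ false x)| := by rw [abs_neg]
    have t3 : |feAux P Φ R z x| ≤ |R x true - R x false|
        + P.β * ((|∫ y', Φ y' z ∂(P.κ true x)|) + |∫ y', Φ y' z ∂(P.κ false x)|) := by
      calc |feAux P Φ R z x|
          ≤ |R x true - R x false|
            + |P.β * ((∫ y', Φ y' z ∂(P.κ true x)) - ∫ y', Φ y' z ∂(P.κ false x))| :=
            abs_add_le _ _
        _ ≤ |R x true - R x false|
            + P.β * ((|∫ y', Φ y' z ∂(P.κ true x)|) + |∫ y', Φ y' z ∂(P.κ false x)|) := by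
            rw [abs_mul, abs_of_nonneg P.hβ0]
            exact add_le_add_right (mul_le_mul_of_nonneg_left t2 P.hβ0) _
    have t4 : P.β * ((|∫ y', Φ y' z ∂(P.κ true x)|) + |∫ y', Φ y' z ∂(P.κ false x)|)
        = P.β * |∫ y', Φ y' z ∂(P.κ true x)| + P.β * |∫ y', Φ y' z ∂(P.κ false x)| :=
      mul_add _ _ _
    have t5 : (2 * P.M + 2 * C * P.γ) * P.w x
        = P.M * P.w x + P.M * P.w x + (C * (P.γ * P.w x) + C * (P.γ * P.w x)) := by ring
    linarith
  -- the threshold kernels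
  have hthr : ∀ (z : EReal) (x : ℝ), P.thrKer z x = P.κ (decide (z < (x:EReal))) x := by
    intro z x
    by_cases hx : z < (x:EReal)
    · rw [decide_eq_true hx]
      simp [Bandit.thrKer, Kernel.piecewise_apply, hx]
    · rw [decide_eq_false hx]
      simp [Bandit.thrKer, Kernel.piecewise_apply, hx]
  have hthrw : ∀ (z : EReal) (x : ℝ), Integrable P.w (P.thrKer z x) := fun z x => by
    rw [hthr]; exact P.hw_int _ x
  have hthrd : ∀ (z : EReal) (x : ℝ),
      P.β * ∫ y, P.w y ∂(P.thrKer z x) ≤ P.γ * P.w x := fun z x => by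
    rw [hthr]; exact P.hw_drift _ x
  -- integrability of Φ against the kernels and p
  have hΦint : ∀ (z : EReal) (C : ℝ), (∀ x, |Φ x z| ≤ C * P.w x) →
      ∀ (a : Bool) (x : ℝ), Integrable (fun y => Φ y z) (P.κ a x) := fun z C hC a x =>
    aux_integrable_of_wbd (hΦ_meas z).aestronglyMeasurable hC (P.hw_int a x)
  have hint1 : ∀ (a : Bool) (x : ℝ), Integrable (fun y => Φ y z₁) (P.κ a x) :=
    hΦint z₁ C₁ hC₁
  have hint2 : ∀ (a : Bool) (x : ℝ), Integrable (fun y => Φ y z₂) (P.κ a x) :=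
    hΦint z₂ C₂ hC₂
  -- measurable set
  have hset : MeasurableSet (iocR z₁ z₂) :=
    measurable_coe_real_ereal (measurableSet_Ioc (a := z₁) (b := z₂))
  -- indicator bounds and measurability
  have hind_bd : ∀ (fe' : ℝ → ℝ) (D : ℝ), 0 ≤ D → (∀ x, |fe' x| ≤ D * P.w x) →
      ∀ x, |(iocR z₁ z₂).indicator fe' x| ≤ D * P.w x := by
    intro fe' D hD hb x
    by_cases hx : x ∈ iocR z₁ z₂
    · rw [Set.indicator_of_mem hx]; exact hb x
    · rw [Set.indicator_of_notMem hx]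
      simpa using mul_nonneg hD (hwnn x)
  have hD2 : 0 ≤ 2 * P.M + 2 * C₂ * P.γ := by nlinarith [P.hM]
  have hD1 : 0 ≤ 2 * P.M + 2 * C₁ * P.γ := by nlinarith [P.hM]
  -- fixed point equation for identity A (threshold z₁, marginal at z₂)
  have heqA : ∀ x, Φ x z₁ - Φ x z₂ = (iocR z₁ z₂).indicator (feAux P Φ R z₂) x
      + P.β * ∫ y, (Φ y z₁ - Φ y z₂) ∂(P.thrKer z₁ x) := by
    intro x
    rw [hthr z₁ x]
    by_cases hx1 : z₁ < (x:EReal)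
    · have e1 := hΦ_eq x z₁
      rw [decide_eq_true hx1] at e1 ⊢
      by_cases hx2 : (x:EReal) ≤ z₂
      · have e2 := hΦ_eq x z₂
        rw [decide_eq_false (not_lt.2 hx2)] at e2
        have hmem : x ∈ iocR z₁ z₂ := ⟨hx1, hx2⟩
        rw [Set.indicator_of_mem hmem, integral_sub (hint1 true x) (hint2 true x)]
        rw [e1, e2]
        simp only [feAux]
        ring
      · have e2 := hΦ_eq x z₂
        rw [decide_eq_true (not_le.1 hx2)] at e2
        have hmem : x ∉ iocR z₁ z₂ := fun hm => hx2 hm.2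
        rw [Set.indicator_of_notMem hmem, integral_sub (hint1 true x) (hint2 true x)]
        rw [e1, e2]
        ring
    · have hxle : (x:EReal) ≤ z₁ := not_lt.1 hx1
      have e1 := hΦ_eq x z₁
      rw [decide_eq_false hx1] at e1 ⊢
      have e2 := hΦ_eq x z₂
      rw [decide_eq_false (not_lt.2 (hxle.trans h.le))] at e2
      have hmem : x ∉ iocR z₁ z₂ := fun hm => hx1 hm.1
      rw [Set.indicator_of_notMem hmem, integral_sub (hint1 false x) (hint2 false x)]
      rw [e1, e2]
      ring
  -- fixed point equation for identity B (threshold z₂, marginal at z₁)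
  have heqB : ∀ x, Φ x z₁ - Φ x z₂ = (iocR z₁ z₂).indicator (feAux P Φ R z₁) x
      + P.β * ∫ y, (Φ y z₁ - Φ y z₂) ∂(P.thrKer z₂ x) := by
    intro x
    rw [hthr z₂ x]
    by_cases hx2 : z₂ < (x:EReal)
    · have e1 := hΦ_eq x z₁
      rw [decide_eq_true (h.trans hx2)] at e1
      have e2 := hΦ_eq x z₂
      rw [decide_eq_true hx2] at e2 ⊢
      have hmem : x ∉ iocR z₁ z₂ := fun hm => (not_le.2 hx2) hm.2
      rw [Set.indicator_of_notMem hmem, integral_sub (hint1 true x) (hint2 true x)]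
      rw [e1, e2]
      ring
    · have e2 := hΦ_eq x z₂
      rw [decide_eq_false hx2] at e2 ⊢
      by_cases hx1 : z₁ < (x:EReal)
      · have e1 := hΦ_eq x z₁
        rw [decide_eq_true hx1] at e1
        have hmem : x ∈ iocR z₁ z₂ := ⟨hx1, not_lt.1 hx2⟩
        rw [Set.indicator_of_mem hmem, integral_sub (hint1 false x) (hint2 false x)]
        rw [e1, e2]
        simp only [feAux]
        ring
      · have e1 := hΦ_eq x z₁
        rw [decide_eq_false hx1] at e1
        have hmem : x ∉ iocR z₁ z₂ := fun hm => hx1 hm.1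
        rw [Set.indicator_of_notMem hmem, integral_sub (hint1 false x) (hint2 false x)]
        rw [e1, e2]
        ring
  -- LHS as a single integral
  have hLHS : (∫ x, Φ x z₁ ∂p) - (∫ x, Φ x z₂ ∂p) = ∫ x, (Φ x z₁ - Φ x z₂) ∂p :=
    (integral_sub
      (aux_integrable_of_wbd (hΦ_meas z₁).aestronglyMeasurable hC₁ hp.2)
      (aux_integrable_of_wbd (hΦ_meas z₂).aestronglyMeasurable hC₂ hp.2)).symm
  constructor
  · have hkey := aux_wkey P.hw_meas P.hw_one P.hβ0 P.hβγ P.hγ1 (P.thrKer z₁)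
      (hthrw z₁) (hthrd z₁) hu ((hfe_meas z₂).indicator hset) hub
      (hind_bd _ _ hD2 (hfe_bd z₂ C₂ hC₂0 hC₂)) heqA p hp.2
    rw [hLHS, hkey]
    rw [show (Measure.sum fun t : ℕ => ENNReal.ofReal (P.β ^ t) • kerIter (P.thrKer z₁) t p)
      = P.occ z₁ p from rfl]
    exact integral_indicator hset
  · have hkey := aux_wkey P.hw_meas P.hw_one P.hβ0 P.hβγ P.hγ1 (P.thrKer z₂)
      (hthrw z₂) (hthrd z₂) hu ((hfe_meas z₁).indicator hset) hub
      (hind_bd _ _ hD1 (hfe_bd z₁ C₁ hC₁0 hC₁)) heqB p hp.2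
    rw [hLHS, hkey]
    rw [show (Measure.sum fun t : ℕ => ENNReal.ofReal (P.β ^ t) • kerIter (P.thrKer z₂) t p)
      = P.occ z₂ p from rfl]
    exact integral_indicator hset

end MainAux

/-- Decomposition identities between threshold metrics and occupation measures:
for thresholds `−∞ ≤ z₁ < z₂ ≤ ∞`,
`F(p,z₁) − F(p,z₂) = ∫_{(z₁,z₂]} f(y,z₂) μ_p^{z₁}(dy) = ∫_{(z₁,z₂]} f(y,z₁) μ_p^{z₂}(dy)`,
and similarly for `G` and `g`. -/
theorem metric_difference_identities (P : Bandit) (p : Measure ℝ)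
    (hp : P.IsInitDist p) (z₁ z₂ : EReal) (h : z₁ < z₂) :
    (P.Fp p z₁ - P.Fp p z₂ = ∫ y in iocR z₁ z₂, P.f y z₂ ∂(P.occ z₁ p) ∧
      P.Fp p z₁ - P.Fp p z₂ = ∫ y in iocR z₁ z₂, P.f y z₁ ∂(P.occ z₂ p)) ∧
    (P.Gp p z₁ - P.Gp p z₂ = ∫ y in iocR z₁ z₂, P.g y z₂ ∂(P.occ z₁ p) ∧
      P.Gp p z₁ - P.Gp p z₂ = ∫ y in iocR z₁ z₂, P.g y z₁ ∂(P.occ z₂ p)) := by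
  have hF := aux_main P P.r P.F P.hF_meas P.hF_bdd P.hF_eq
    (fun a => (P.hr_cont a).measurable) P.hr_bd p hp z₁ z₂ h
  have hcabs : ∀ (x : ℝ) (a : Bool), |P.c x a| ≤ P.M * P.w x := by
    intro x a
    have h0 : 0 ≤ P.c x a := by
      cases a
      · exact P.hc0 x
      · exact (P.hc0 x).trans (P.hc01 x).le
    rw [abs_of_nonneg h0]
    exact P.hc_bd x a
  have hG := aux_main P P.c P.G P.hG_meas P.hG_bdd P.hG_eq
    (fun a => (P.hc_cont a).measurable) hcabs p hp z₁ z₂ h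
  exact ⟨⟨hF.1, hF.2⟩, ⟨hG.1, hG.2⟩⟩
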